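/- arXiv:1908.11744 — 18 statements merged into one kernel-verified Lean document; each statement's English description precedes it below -/
import Mathlib

section
/- Let (B,+,∘,λ) be a brace-like left semi-truss with multiplicative identity 1. Then the set 1 + B = {1 + b : b ∈ B} is a subsemigroup of the group (B,∘); that is, for all a, b ∈ B there exists c ∈ B such that (1 + a) ∘ (1 + b) = 1 + c. -/
/-- Brace-like left semi-truss: `(B,+)` a semigroup, `(B,∘)` a group with
identity `one` and inverse `inv`, and `lam : B → B → B` with each `lam a` an
endomorphism of `(B,+)`, `lam` a morphism from `(B,∘)`, and the
brace-like distributive law. -/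
theorem stmt_1 (B : Type*)
    (add mul : B → B → B) (one : B) (inv : B → B) (lam : B → B → B)
    (add_assoc : ∀ a b c : B, add (add a b) c = add a (add b c))
    (mul_assoc : ∀ a b c : B, mul (mul a b) c = mul a (mul b c))
    (one_mul : ∀ a : B, mul one a = a) (mul_one : ∀ a : B, mul a one = a)
    (inv_mul : ∀ a : B, mul (inv a) a = one) (mul_inv : ∀ a : B, mul a (inv a) = one)
    (lam_add : ∀ a x y : B, lam a (add x y) = add (lam a x) (lam a y))
    (lam_mul : ∀ a b x : B, lam (mul a b) x = lam a (lam b x))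
    (dist : ∀ a b c : B, mul a (add b c) = add (mul a b) (lam a c)) :
    ∀ a b : B, ∃ c : B, mul (add one a) (add one b) = add one c := by
  intro a b
  refine ⟨add a (lam (add one a) b), ?_⟩
  rw [dist, mul_one, add_assoc]
end

section
/- Let (B,+,∘,λ) be a brace-like left semi-truss. If B has at least two elements, then the semigroup (B,+) contains no zero element; that is, there is no θ ∈ B such that θ + a = θ and a + θ = θ for all a ∈ B. -/
/-- Brace-like left semi-truss: `(B,+)` a semigroup, `(B,∘)` a group with
identity `one` and inverse `inv`, and `lam : B → B → B` with each `lam a` an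
endomorphism of `(B,+)`, `lam` a morphism from `(B,∘)`, and the
brace-like distributive law. -/
theorem stmt_2 (B : Type*)
    (add mul : B → B → B) (one : B) (inv : B → B) (lam : B → B → B)
    (add_assoc : ∀ a b c : B, add (add a b) c = add a (add b c))
    (mul_assoc : ∀ a b c : B, mul (mul a b) c = mul a (mul b c))
    (one_mul : ∀ a : B, mul one a = a) (mul_one : ∀ a : B, mul a one = a)
    (inv_mul : ∀ a : B, mul (inv a) a = one) (mul_inv : ∀ a : B, mul a (inv a) = one)
    (lam_add : ∀ a x y : B, lam a (add x y) = add (lam a x) (lam a y))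
    (lam_mul : ∀ a b x : B, lam (mul a b) x = lam a (lam b x))
    (dist : ∀ a b c : B, mul a (add b c) = add (mul a b) (lam a c))
    (htwo : ∃ a b : B, a ≠ b) :
    ¬ ∃ θ : B, ∀ a : B, add θ a = θ ∧ add a θ = θ := by
  rintro ⟨θ, hθ⟩
  obtain ⟨a, b, hab⟩ := htwo
  -- key1: ∀ u v, add u (lam one v) = u
  have key1 : ∀ u v : B, add u (lam one v) = u := by
    intro u v
    set s := mul u (inv θ) with hs
    have hsθ : mul s θ = u := by
      rw [hs, mul_assoc, inv_mul, mul_one]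
    have h1 : ∀ c : B, add u (lam s c) = u := by
      intro c
      have := dist s θ c
      rw [(hθ c).1, hsθ] at this
      exact this.symm
    have h2 := h1 (lam (inv s) v)
    rwa [← lam_mul, mul_inv] at h2
  -- key2: ∀ b c, add b c = add b (lam one c)
  have key2 : ∀ x y : B, add x y = add x (lam one y) := by
    intro x y
    have := dist one x y
    rwa [one_mul, one_mul] at this
  have hall : ∀ x y : B, add x y = x := fun x y => (key2 x y).trans (key1 x y)
  have ha : θ = a := ((hθ a).2).symm.trans (hall a θ)
  have hb : θ = b := ((hθ b).2).symm.trans (hall b θ)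
  exact hab (ha.symm.trans hb)
end

section
/- Let (B,+,∘,λ) be a brace-like left semi-truss with multiplicative identity 1, and let P = {a + b : a, b ∈ B}. Then 1 ∈ P and P is a subgroup of the group (B,∘); in particular, for all p, q ∈ P one has p̄ ∘ q ∈ P. -/
/-- Brace-like left semi-truss: `(B,+)` a semigroup, `(B,∘)` a group with
identity `one` and inverse `inv`, and `lam : B → B → B` with each `lam a` an
endomorphism of `(B,+)`, `lam` a morphism from `(B,∘)`, and the
brace-like distributive law. -/
theorem stmt_3 (B : Type*)
    (add mul : B → B → B) (one : B) (inv : B → B) (lam : B → B → B)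
    (add_assoc : ∀ a b c : B, add (add a b) c = add a (add b c))
    (mul_assoc : ∀ a b c : B, mul (mul a b) c = mul a (mul b c))
    (one_mul : ∀ a : B, mul one a = a) (mul_one : ∀ a : B, mul a one = a)
    (inv_mul : ∀ a : B, mul (inv a) a = one) (mul_inv : ∀ a : B, mul a (inv a) = one)
    (lam_add : ∀ a x y : B, lam a (add x y) = add (lam a x) (lam a y))
    (lam_mul : ∀ a b x : B, lam (mul a b) x = lam a (lam b x))
    (dist : ∀ a b c : B, mul a (add b c) = add (mul a b) (lam a c)) :
    one ∈ {x : B | ∃ a b : B, add a b = x} ∧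
      ∀ p ∈ {x : B | ∃ a b : B, add a b = x}, ∀ q ∈ {x : B | ∃ a b : B, add a b = x},
        mul (inv p) q ∈ {x : B | ∃ a b : B, add a b = x} := by
  constructor
  · exact ⟨mul (inv (add one one)) one, lam (inv (add one one)) one, by
      rw [← dist, inv_mul]⟩
  · rintro p _ q ⟨c, d, rfl⟩
    exact ⟨mul (inv p) c, lam (inv p) d, (dist _ _ _).symm⟩
end

section
/- Let (B,+,∘,λ) be a brace-like left semi-truss with multiplicative identity 1, and let P = {a + b : a, b ∈ B}. Then the set D = (B \ P) ∪ {1} is a subgroup of the group (B,∘); in particular, for all a, b ∈ D one has ā ∘ b ∈ D. -/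
/-- Brace-like left semi-truss: `(B,+)` a semigroup, `(B,∘)` a group with
identity `one` and inverse `inv`, and `lam : B → B → B` with each `lam a` an
endomorphism of `(B,+)`, `lam` a morphism from `(B,∘)`, and the
brace-like distributive law. -/
theorem stmt_4 (B : Type*)
    (add mul : B → B → B) (one : B) (inv : B → B) (lam : B → B → B)
    (add_assoc : ∀ a b c : B, add (add a b) c = add a (add b c))
    (mul_assoc : ∀ a b c : B, mul (mul a b) c = mul a (mul b c))
    (one_mul : ∀ a : B, mul one a = a) (mul_one : ∀ a : B, mul a one = a)
    (inv_mul : ∀ a : B, mul (inv a) a = one) (mul_inv : ∀ a : B, mul a (inv a) = one)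
    (lam_add : ∀ a x y : B, lam a (add x y) = add (lam a x) (lam a y))
    (lam_mul : ∀ a b x : B, lam (mul a b) x = lam a (lam b x))
    (dist : ∀ a b c : B, mul a (add b c) = add (mul a b) (lam a c)) :
    ∀ a ∈ ({x : B | ∃ u v : B, add u v = x}ᶜ ∪ {one} : Set B),
      ∀ b ∈ ({x : B | ∃ u v : B, add u v = x}ᶜ ∪ {one} : Set B),
        mul (inv a) b ∈ ({x : B | ∃ u v : B, add u v = x}ᶜ ∪ {one} : Set B) := by
  intro a ha b hb
  -- key: if x ∈ P then a ∘ x ∈ P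
  have key : ∀ c x : B, (∃ u v : B, add u v = x) → ∃ u v : B, add u v = mul c x := by
    rintro c x ⟨u, v, rfl⟩
    exact ⟨mul c u, lam c v, (dist c u v).symm⟩
  have inv_one : inv one = one := by
    have := inv_mul one
    rwa [mul_one] at this
  by_cases h : ∃ u v : B, add u v = mul (inv a) b
  · right
    -- b = a ∘ (a⁻¹ ∘ b) ∈ P
    have hbP : ∃ u v : B, add u v = b := by
      have := key a _ h
      rwa [← mul_assoc, mul_inv, one_mul] at this
    have hb1 : b = one := by
      rcases hb with hb | hb
      · exact absurd hbP hb
      · exact hb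
    rw [hb1, mul_one] at h
    rw [hb1, mul_one]
    -- now a⁻¹ ∈ P; show a = one
    have ha1 : a = one := by
      rcases ha with ha | ha
      · exfalso
        have h1P : ∃ u v : B, add u v = one := by
          have := key a _ h
          rwa [mul_inv] at this
        have haP : ∃ u v : B, add u v = a := by
          have := key a _ h1P
          rwa [mul_one] at this
        exact ha haP
      · exact ha
    rw [ha1]
    exact inv_one
  · left
    exact h
end

section
/- Let (B,+,∘,λ) be a brace-like left semi-truss. Then B = B + B; that is, every element c ∈ B can be written as c = a + b for some a, b ∈ B. -/
/-- Brace-like left semi-truss: `(B,+)` a semigroup, `(B,∘)` a group with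
identity `one` and inverse `inv`, and `lam : B → B → B` with each `lam a` an
endomorphism of `(B,+)`, `lam` a morphism from `(B,∘)`, and the
brace-like distributive law. -/
theorem stmt_5 (B : Type*)
    (add mul : B → B → B) (one : B) (inv : B → B) (lam : B → B → B)
    (add_assoc : ∀ a b c : B, add (add a b) c = add a (add b c))
    (mul_assoc : ∀ a b c : B, mul (mul a b) c = mul a (mul b c))
    (one_mul : ∀ a : B, mul one a = a) (mul_one : ∀ a : B, mul a one = a)
    (inv_mul : ∀ a : B, mul (inv a) a = one) (mul_inv : ∀ a : B, mul a (inv a) = one)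
    (lam_add : ∀ a x y : B, lam a (add x y) = add (lam a x) (lam a y))
    (lam_mul : ∀ a b x : B, lam (mul a b) x = lam a (lam b x))
    (dist : ∀ a b c : B, mul a (add b c) = add (mul a b) (lam a c)) :
    ∀ c : B, ∃ a b : B, add a b = c := by
  intro c
  set t := add one one with ht
  set a := mul c (inv t) with ha
  refine ⟨mul a one, lam a one, ?_⟩
  have h1 : add (mul a one) (lam a one) = mul a t := by
    rw [ht, dist]
  rw [h1, ha, mul_assoc, inv_mul, mul_one]
end

section
/- Let (B,+,∘,λ) be a brace-like left semi-truss with B a finite set and with multiplicative identity 1. Then there exists an element z ∈ B with z + z = z such that the set z + B + z = {z + b + z : b ∈ B} coincides with {1 + b + z : b ∈ B} and is a group under +, with identity element z; that is, for every x ∈ z + B + z one has z + x = x and x + z = x, and there exists y ∈ z + B + z with x + y = z. -/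
/-- Brace-like left semi-truss: `(B,+)` a semigroup, `(B,∘)` a group with
identity `one` and inverse `inv`, and `lam : B → B → B` with each `lam a` an
endomorphism of `(B,+)`, `lam` a morphism from `(B,∘)`, and the
brace-like distributive law. -/
theorem stmt_6 (B : Type*) [Finite B]
    (add mul : B → B → B) (one : B) (inv : B → B) (lam : B → B → B)
    (add_assoc : ∀ a b c : B, add (add a b) c = add a (add b c))
    (mul_assoc : ∀ a b c : B, mul (mul a b) c = mul a (mul b c))
    (one_mul : ∀ a : B, mul one a = a) (mul_one : ∀ a : B, mul a one = a)
    (inv_mul : ∀ a : B, mul (inv a) a = one) (mul_inv : ∀ a : B, mul a (inv a) = one)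
    (lam_add : ∀ a x y : B, lam a (add x y) = add (lam a x) (lam a y))
    (lam_mul : ∀ a b x : B, lam (mul a b) x = lam a (lam b x))
    (dist : ∀ a b c : B, mul a (add b c) = add (mul a b) (lam a c)) :
    ∃ z : B, add z z = z ∧
      {x : B | ∃ b : B, add (add z b) z = x} = {x : B | ∃ b : B, add (add one b) z = x} ∧
      ∀ x : B, (∃ b : B, add (add z b) z = x) →
        add z x = x ∧ add x z = x ∧
          ∃ y : B, (∃ b : B, add (add z b) z = y) ∧ add x y = z := by
  classical
  -- `a + c = a + lam one c`
  have absorb : ∀ a c : B, add a (lam one c) = add a c := by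
    intro a c
    have h := dist one a c
    rw [one_mul, one_mul] at h
    exact h.symm
  set T : Set B := {x | ∃ b : B, add one b = x} with hTdef
  have Tadd : ∀ x ∈ T, ∀ c : B, add x c ∈ T := by
    rintro x ⟨b, rfl⟩ c
    exact ⟨add b c, (add_assoc one b c).symm⟩
  have hTfin : T.Finite := Set.toFinite T
  -- key surjectivity: for s, y ∈ T there is c with s + c = y
  have key : ∀ s ∈ T, ∀ y ∈ T, ∃ c : B, add s c = y := by
    intro s hs y hy
    have himg : Set.range (add s) = (mul s) '' T := by
      ext w
      constructor
      · rintro ⟨c, rfl⟩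
        refine ⟨add one (lam (inv s) c), ⟨lam (inv s) c, rfl⟩, ?_⟩
        rw [dist, mul_one, ← lam_mul, mul_inv, absorb]
      · rintro ⟨u, ⟨b, rfl⟩, rfl⟩
        exact ⟨lam s b, by rw [dist, mul_one]⟩
    have hsub : Set.range (add s) ⊆ T := by
      rintro w ⟨c, rfl⟩
      exact Tadd s hs c
    have hinj : Function.Injective (mul s) := by
      intro a b h
      have h2 : mul (inv s) (mul s a) = mul (inv s) (mul s b) := by rw [h]
      rwa [← mul_assoc, ← mul_assoc, inv_mul, one_mul, one_mul] at h2
    have hcard : T.ncard ≤ (Set.range (add s)).ncard := by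
      rw [himg, Set.ncard_image_of_injective _ hinj]
    have heq := Set.eq_of_subset_of_ncard_le hsub hcard hTfin
    rw [← heq] at hy
    exact hy
  -- a chosen element of T
  set t : B := add one one with htdef
  have ht : t ∈ T := ⟨one, rfl⟩
  haveI : Finite ↥T := hTfin.to_subtype
  -- left translation by t on T is surjective, hence bijective
  have esurj : Function.Surjective (fun x : ↥T => (⟨add t x, Tadd t ht x⟩ : ↥T)) := by
    rintro ⟨y, hy⟩
    obtain ⟨c, hc⟩ := key (add t t) (Tadd t ht t) y hy
    refine ⟨⟨add t c, Tadd t ht c⟩, ?_⟩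
    apply Subtype.ext
    show add t (add t c) = y
    rw [← add_assoc, hc]
  let p : Equiv.Perm ↥T := Equiv.ofBijective _ esurj.bijective_of_finite
  have hp : ∀ x : ↥T, ((p x : B)) = add t x := fun x => rfl
  obtain ⟨n, hnpos, hn1⟩ : ∃ n, 0 < n ∧ p ^ n = 1 :=
    (isOfFinOrder_of_finite p).exists_pow_eq_one
  -- iterates of p compute iterated addition of t
  have hiter : ∀ (k : ℕ) (x : ↥T), ((p ^ k) x : B) = (add t)^[k] (x : B) := by
    intro k
    induction k with
    | zero => intro x; simp
    | succ k ih =>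
      intro x
      have h1 : (p ^ (k + 1)) x = (p ^ k) (p x) := by
        rw [pow_succ]
        rfl
      rw [h1, ih (p x), hp, Function.iterate_succ_apply]
  have hshift : ∀ (k : ℕ) (x : B), add ((add t)^[k] t) x = (add t)^[k + 1] x := by
    intro k
    induction k with
    | zero => intro x; rfl
    | succ k ih =>
      intro x
      rw [Function.iterate_succ_apply', add_assoc, ih,
        ← Function.iterate_succ_apply' (add t) (k + 1) x]
  -- build the idempotent z
  set z : B := (add t)^[n - 1] t with hzdef
  have hzT : z ∈ T := by
    have h1 : ((p ^ (n - 1)) ⟨t, ht⟩ : B) = z := hiter (n - 1) ⟨t, ht⟩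
    rw [← h1]
    exact ((p ^ (n - 1)) ⟨t, ht⟩).2
  have hzid : ∀ x ∈ T, add z x = x := by
    intro x hx
    have h1 : add z x = (add t)^[n] x := by
      rw [hzdef, hshift]
      congr 1
      omega
    have h2 := hiter n ⟨x, hx⟩
    rw [hn1] at h2
    simpa [h1] using h2.symm
  have hzz : add z z = z := hzid z hzT
  refine ⟨z, hzz, ?_, ?_⟩
  · ext x
    simp only [Set.mem_setOf_eq]
    constructor
    · rintro ⟨b, rfl⟩
      obtain ⟨c, hc⟩ : add z b ∈ T := Tadd z hzT b
      exact ⟨c, by rw [hc]⟩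
    · rintro ⟨b, rfl⟩
      obtain ⟨c, hc⟩ := key z hzT (add one b) ⟨b, rfl⟩
      exact ⟨c, by rw [hc]⟩
  · rintro x ⟨b, rfl⟩
    have hwT : add z b ∈ T := Tadd z hzT b
    have hxT : add (add z b) z ∈ T := Tadd _ hwT z
    have hxz : add (add (add z b) z) z = add (add z b) z := by
      rw [add_assoc (add z b) z z, hzz]
    refine ⟨hzid _ hxT, hxz, ?_⟩
    obtain ⟨c, hc⟩ := key (add (add z b) z) hxT z hzT
    refine ⟨add (add z c) z, ⟨c, rfl⟩, ?_⟩
    rw [← add_assoc, ← add_assoc, hxz, hc, hzz]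
end

section
/- Let (B,+,∘,λ) be a brace-like left semi-truss and let z ∈ B be an idempotent of (B,+) (z + z = z) such that the set z + B + z = {z + b + z : b ∈ B} is a group under + with identity z (i.e., z + x = x = x + z for all x ∈ z + B + z, and every x ∈ z + B + z has an element y ∈ z + B + z with x + y = z = y + x). Then for any c ∈ B there exists b ∈ B with c = c + z + b; in particular B = B + z + B. -/
/-- Brace-like left semi-truss: `(B,+)` a semigroup, `(B,∘)` a group with
identity `one` and inverse `inv`, and `lam : B → B → B` with each `lam a` an
endomorphism of `(B,+)`, `lam` a morphism from `(B,∘)`, and the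
brace-like distributive law. -/
theorem stmt_7 (B : Type*)
    (add mul : B → B → B) (one : B) (inv : B → B) (lam : B → B → B)
    (add_assoc : ∀ a b c : B, add (add a b) c = add a (add b c))
    (mul_assoc : ∀ a b c : B, mul (mul a b) c = mul a (mul b c))
    (one_mul : ∀ a : B, mul one a = a) (mul_one : ∀ a : B, mul a one = a)
    (inv_mul : ∀ a : B, mul (inv a) a = one) (mul_inv : ∀ a : B, mul a (inv a) = one)
    (lam_add : ∀ a x y : B, lam a (add x y) = add (lam a x) (lam a y))
    (lam_mul : ∀ a b x : B, lam (mul a b) x = lam a (lam b x))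
    (dist : ∀ a b c : B, mul a (add b c) = add (mul a b) (lam a c))
    (z : B) (hz : add z z = z)
    (hzid : ∀ x : B, (∃ b : B, add (add z b) z = x) → add z x = x ∧ add x z = x)
    (hzinv : ∀ x : B, (∃ b : B, add (add z b) z = x) →
      ∃ y : B, (∃ b : B, add (add z b) z = y) ∧ add x y = z ∧ add y x = z) :
    (∀ c : B, ∃ b : B, c = add (add c z) b) ∧
      ∀ c : B, ∃ x y : B, c = add (add x z) y := by
  have key : ∀ c : B, ∃ b : B, c = add (add c z) b := by
    intro c
    have hec : mul (mul z (inv c)) c = z := by rw [mul_assoc, inv_mul, mul_one]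
    have hax : ∀ x : B, mul (inv (mul z (inv c))) (mul (mul z (inv c)) x) = x := by
      intro x; rw [← mul_assoc, inv_mul, one_mul]
    obtain ⟨y, hyG, hy1, hy2⟩ :=
      hzinv (add (add z (lam (mul z (inv c)) z)) z) ⟨lam (mul z (inv c)) z, rfl⟩
    have hzy : add z y = y := (hzid y hyG).1
    have h1 : add (add z (lam (mul z (inv c)) z)) y = z := by
      rw [add_assoc, hzy] at hy1; exact hy1
    refine ⟨lam (inv (mul z (inv c))) y, ?_⟩
    calc c = mul (inv (mul z (inv c))) (mul (mul z (inv c)) c) := (hax c).symm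
      _ = mul (inv (mul z (inv c))) z := by rw [hec]
      _ = mul (inv (mul z (inv c))) (add (add z (lam (mul z (inv c)) z)) y) := by rw [h1]
      _ = add (mul (inv (mul z (inv c))) (add z (lam (mul z (inv c)) z)))
            (lam (inv (mul z (inv c))) y) := dist _ _ _
      _ = add (mul (inv (mul z (inv c))) (mul (mul z (inv c)) (add c z)))
            (lam (inv (mul z (inv c))) y) := by
              rw [show mul (mul z (inv c)) (add c z) = add z (lam (mul z (inv c)) z) from by
                rw [dist, hec]]
      _ = add (add c z) (lam (inv (mul z (inv c))) y) := by rw [hax]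
  exact ⟨key, fun c => ⟨c, (key c).choose, (key c).choose_spec⟩⟩
end

section
/- Let (B,+,∘,λ) be a brace-like left semi-truss and let z ∈ B be an idempotent of (B,+) (z + z = z) such that the set z + B + z = {z + b + z : b ∈ B} is a group under + with identity z (i.e., z + x = x = x + z for all x ∈ z + B + z, and every x ∈ z + B + z has an element y ∈ z + B + z with x + y = z = y + x). Then the semigroup (B,+) is simple, i.e., for every b ∈ B one has B + b + B = B (every c ∈ B can be written c = x + b + y with x, y ∈ B), and z is a primitive idempotent of (B,+): for every idempotent e of (B,+) with e + z = e and z + e = e, one has e = z. -/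
/-- Brace-like left semi-truss: `(B,+)` a semigroup, `(B,∘)` a group with
identity `one` and inverse `inv`, and `lam : B → B → B` with each `lam a` an
endomorphism of `(B,+)`, `lam` a morphism from `(B,∘)`, and the
brace-like distributive law. -/
theorem stmt_8 (B : Type*)
    (add mul : B → B → B) (one : B) (inv : B → B) (lam : B → B → B)
    (add_assoc : ∀ a b c : B, add (add a b) c = add a (add b c))
    (mul_assoc : ∀ a b c : B, mul (mul a b) c = mul a (mul b c))
    (one_mul : ∀ a : B, mul one a = a) (mul_one : ∀ a : B, mul a one = a)
    (inv_mul : ∀ a : B, mul (inv a) a = one) (mul_inv : ∀ a : B, mul a (inv a) = one)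
    (lam_add : ∀ a x y : B, lam a (add x y) = add (lam a x) (lam a y))
    (lam_mul : ∀ a b x : B, lam (mul a b) x = lam a (lam b x))
    (dist : ∀ a b c : B, mul a (add b c) = add (mul a b) (lam a c))
    (z : B) (hz : add z z = z)
    (hzid : ∀ x : B, (∃ b : B, add (add z b) z = x) → add z x = x ∧ add x z = x)
    (hzinv : ∀ x : B, (∃ b : B, add (add z b) z = x) →
      ∃ y : B, (∃ b : B, add (add z b) z = y) ∧ add x y = z ∧ add y x = z) :
    (∀ b c : B, ∃ x y : B, c = add (add x b) y) ∧
      ∀ e : B, add e e = e → add e z = e → add z e = e → e = z := by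
  -- `star`: adding `lam one q` on the right is the same as adding `q`.
  have star : ∀ p q : B, add p (lam one q) = add p q := by
    intro p q
    have h := dist one p q
    rw [one_mul, one_mul] at h
    exact h.symm
  constructor
  · intro b c
    set a : B := mul c (inv z) with ha_def
    have hac : mul a z = c := by
      rw [ha_def, mul_assoc, inv_mul, mul_one]
    set s : B := lam (inv a) z with hs_def
    obtain ⟨g', hg'mem, hgg', hg'g⟩ := hzinv (add (add z s) z) ⟨s, rfl⟩
    have hg'z : add g' z = g' := (hzid g' hg'mem).2
    have e1 : lam (inv a) (lam a z) = lam one z := by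
      rw [← lam_mul (inv a) a z, inv_mul]
    -- the key element equals z
    have h1 : add (add g' s) (lam (inv a) (lam a z)) = z := by
      calc add (add g' s) (lam (inv a) (lam a z))
          = add (add g' s) (lam one z) := congrArg (add (add g' s)) e1
        _ = add (add g' s) z := star (add g' s) z
        _ = add (add (add g' z) s) z := congrArg (fun w => add (add w s) z) hg'z.symm
        _ = add (add g' (add z s)) z := congrArg (fun w => add w z) (add_assoc g' z s)
        _ = add g' (add (add z s) z) := add_assoc g' (add z s) z
        _ = z := hg'g
    have h2 : c = mul a (add (add g' s) (lam (inv a) (lam a z))) := by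
      rw [h1]; exact hac.symm
    have e2 : lam a (lam (inv a) z) = lam one z := by
      rw [← lam_mul a (inv a) z, mul_inv]
    have e3 : lam a (lam (inv a) (lam a z)) = lam one (lam a z) := by
      rw [← lam_mul a (inv a) (lam a z), mul_inv]
    have h3 : c = add (add (mul a g') z) (lam a z) := by
      calc c = mul a (add (add g' s) (lam (inv a) (lam a z))) := h2
        _ = add (mul a (add g' s)) (lam a (lam (inv a) (lam a z))) :=
            dist a (add g' s) (lam (inv a) (lam a z))
        _ = add (add (mul a g') (lam a s)) (lam a (lam (inv a) (lam a z))) :=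
            congrArg (fun w => add w (lam a (lam (inv a) (lam a z)))) (dist a g' s)
        _ = add (add (mul a g') (lam one z)) (lam one (lam a z)) := by
            rw [hs_def, e2, e3]
        _ = add (add (mul a g') z) (lam one (lam a z)) :=
            congrArg (fun w => add w (lam one (lam a z))) (star (mul a g') z)
        _ = add (add (mul a g') z) (lam a z) := star (add (mul a g') z) (lam a z)
    -- now replace the middle z by gb' + b + z
    obtain ⟨gb', hgbmem, hgbgb', hgb'gb⟩ := hzinv (add (add z b) z) ⟨b, rfl⟩
    have hgb'z : add gb' z = gb' := (hzid gb' hgbmem).2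
    have hz2 : z = add (add gb' b) z := by
      calc z = add gb' (add (add z b) z) := hgb'gb.symm
        _ = add (add gb' (add z b)) z := (add_assoc gb' (add z b) z).symm
        _ = add (add (add gb' z) b) z := congrArg (fun w => add w z) (add_assoc gb' z b).symm
        _ = add (add gb' b) z := congrArg (fun w => add (add w b) z) hgb'z
    refine ⟨add (mul a g') gb', add z (lam a z), ?_⟩
    calc c = add (add (mul a g') z) (lam a z) := h3
      _ = add (add (mul a g') (add (add gb' b) z)) (lam a z) :=
          congrArg (fun w => add (add (mul a g') w) (lam a z)) hz2
      _ = add (add (add (mul a g') (add gb' b)) z) (lam a z) :=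
          congrArg (fun w => add w (lam a z)) (add_assoc (mul a g') (add gb' b) z).symm
      _ = add (add (add (add (mul a g') gb') b) z) (lam a z) :=
          congrArg (fun w => add (add w z) (lam a z)) (add_assoc (mul a g') gb' b).symm
      _ = add (add (add (mul a g') gb') b) (add z (lam a z)) :=
          add_assoc (add (add (mul a g') gb') b) z (lam a z)
  · intro e hee hez hze
    obtain ⟨e', he'mem, hee', he'e⟩ := hzinv e ⟨e, by rw [hze, hez]⟩
    calc e = add z e := hze.symm
      _ = add (add e' e) e := congrArg (fun w => add w e) he'e.symm
      _ = add e' (add e e) := add_assoc e' e e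
      _ = add e' e := congrArg (add e') hee
      _ = z := he'e
end

section
/- Let (B,+,∘,ι) be an almost left semi-brace and define λ_a(b) := a ∘ (ι(a) + b) for a, b ∈ B. Then each λ_a is an endomorphism of the semigroup (B,+), i.e., λ_a(x + y) = λ_a(x) + λ_a(y) for all x, y ∈ B, and λ is a homomorphism from (B,∘), i.e., λ_{a∘b}(x) = λ_a(λ_b(x)) for all a, b, x ∈ B. -/
/-- Almost left semi-brace: `(B,+)` a semigroup, `(B,∘)` a group with identity
`one` and inverse `inv`, and `iota : B → B` with `ι(a∘b) = b̄ ∘ ι(a)` and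
`a ∘ (b + c) = (a ∘ b) + a ∘ (ι(a) + c)`. -/
theorem stmt_9 (B : Type*)
    (add mul : B → B → B) (one : B) (inv : B → B) (iota : B → B)
    (add_assoc : ∀ a b c : B, add (add a b) c = add a (add b c))
    (mul_assoc : ∀ a b c : B, mul (mul a b) c = mul a (mul b c))
    (one_mul : ∀ a : B, mul one a = a) (mul_one : ∀ a : B, mul a one = a)
    (inv_mul : ∀ a : B, mul (inv a) a = one) (mul_inv : ∀ a : B, mul a (inv a) = one)
    (iota_mul : ∀ a b : B, iota (mul a b) = mul (inv b) (iota a))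
    (dist : ∀ a b c : B, mul a (add b c) = add (mul a b) (mul a (add (iota a) c)))
    (lam : B → B → B) (hlam : ∀ a b : B, lam a b = mul a (add (iota a) b)) :
    (∀ a x y : B, lam a (add x y) = add (lam a x) (lam a y)) ∧
      ∀ a b x : B, lam (mul a b) x = lam a (lam b x) := by
  constructor
  · intro a x y
    rw [hlam, hlam, hlam, ← add_assoc, dist]
  · intro a b x
    rw [hlam, hlam, hlam, iota_mul, mul_assoc]
    congr 1
    rw [dist b (mul (inv b) (iota a)) x, ← mul_assoc, mul_inv, one_mul]
end

section
/- Let (B,+,∘,ι) be an almost left semi-brace and define λ_a(b) := a ∘ (ι(a) + b) for a, b ∈ B. Then for every a ∈ B and every idempotent e of (B,+) (i.e., e + e = e), the element λ_a(e) is an idempotent of (B,+) and satisfies ι(1) + λ_a(e) = λ_a(e); that is, λ_a maps idempotents of (B,+) into the idempotents lying in the set ι(1) + B. -/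
/-- Almost left semi-brace: `(B,+)` a semigroup, `(B,∘)` a group with identity
`one` and inverse `inv`, and `iota : B → B` with `ι(a∘b) = b̄ ∘ ι(a)` and
`a ∘ (b + c) = (a ∘ b) + a ∘ (ι(a) + c)`. -/
theorem stmt_10 (B : Type*)
    (add mul : B → B → B) (one : B) (inv : B → B) (iota : B → B)
    (add_assoc : ∀ a b c : B, add (add a b) c = add a (add b c))
    (mul_assoc : ∀ a b c : B, mul (mul a b) c = mul a (mul b c))
    (one_mul : ∀ a : B, mul one a = a) (mul_one : ∀ a : B, mul a one = a)
    (inv_mul : ∀ a : B, mul (inv a) a = one) (mul_inv : ∀ a : B, mul a (inv a) = one)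
    (iota_mul : ∀ a b : B, iota (mul a b) = mul (inv b) (iota a))
    (dist : ∀ a b c : B, mul a (add b c) = add (mul a b) (mul a (add (iota a) c)))
    (lam : B → B → B) (hlam : ∀ a b : B, lam a b = mul a (add (iota a) b)) :
    ∀ a e : B, add e e = e →
      add (lam a e) (lam a e) = lam a e ∧ add (iota one) (lam a e) = lam a e := by
  intro a e he
  have inv_inv : ∀ x : B, inv (inv x) = x := by
    intro x
    have h := mul_assoc (inv (inv x)) (inv x) x
    rw [inv_mul, inv_mul, one_mul, mul_one] at h
    exact h.symm
  have hmi : mul a (iota a) = iota one := by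
    have h := iota_mul a (inv a)
    rw [mul_inv, inv_inv] at h
    exact h.symm
  have hidem : add (lam a e) (lam a e) = lam a e := by
    have h := dist a (add (iota a) e) e
    rw [add_assoc, he] at h
    rw [hlam]
    exact h.symm
  have hsnd : add (iota one) (lam a e) = lam a e := by
    have h := dist a (iota a) e
    rw [hmi] at h
    rw [hlam]
    exact h.symm
  exact ⟨hidem, hsnd⟩
end

section
/- Let (B,+,∘,ι) be an almost left semi-brace. Then for all a, b ∈ B one has a + b = a + ι(1) + b. -/
/-- Almost left semi-brace: `(B,+)` a semigroup, `(B,∘)` a group with identity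
`one` and inverse `inv`, and `iota : B → B` with `ι(a∘b) = b̄ ∘ ι(a)` and
`a ∘ (b + c) = (a ∘ b) + a ∘ (ι(a) + c)`. -/
theorem stmt_11 (B : Type*)
    (add mul : B → B → B) (one : B) (inv : B → B) (iota : B → B)
    (add_assoc : ∀ a b c : B, add (add a b) c = add a (add b c))
    (mul_assoc : ∀ a b c : B, mul (mul a b) c = mul a (mul b c))
    (one_mul : ∀ a : B, mul one a = a) (mul_one : ∀ a : B, mul a one = a)
    (inv_mul : ∀ a : B, mul (inv a) a = one) (mul_inv : ∀ a : B, mul a (inv a) = one)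
    (iota_mul : ∀ a b : B, iota (mul a b) = mul (inv b) (iota a))
    (dist : ∀ a b c : B, mul a (add b c) = add (mul a b) (mul a (add (iota a) c))) :
    ∀ a b : B, add a b = add (add a (iota one)) b := by
  intro a b
  have h := dist one a b
  simp only [one_mul] at h
  rw [h, add_assoc]
end

section
/- Let (B,+,∘,ι) be an almost left semi-brace. Then the map ι is bijective, and ι(a) = ā ∘ ι(1) for every a ∈ B. -/
/-- Almost left semi-brace: `(B,+)` a semigroup, `(B,∘)` a group with identity
`one` and inverse `inv`, and `iota : B → B` with `ι(a∘b) = b̄ ∘ ι(a)` and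
`a ∘ (b + c) = (a ∘ b) + a ∘ (ι(a) + c)`. -/
theorem stmt_12 (B : Type*)
    (add mul : B → B → B) (one : B) (inv : B → B) (iota : B → B)
    (add_assoc : ∀ a b c : B, add (add a b) c = add a (add b c))
    (mul_assoc : ∀ a b c : B, mul (mul a b) c = mul a (mul b c))
    (one_mul : ∀ a : B, mul one a = a) (mul_one : ∀ a : B, mul a one = a)
    (inv_mul : ∀ a : B, mul (inv a) a = one) (mul_inv : ∀ a : B, mul a (inv a) = one)
    (iota_mul : ∀ a b : B, iota (mul a b) = mul (inv b) (iota a))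
    (dist : ∀ a b c : B, mul a (add b c) = add (mul a b) (mul a (add (iota a) c))) :
    Function.Bijective iota ∧ ∀ a : B, iota a = mul (inv a) (iota one) := by
  have hformula : ∀ a : B, iota a = mul (inv a) (iota one) := by
    intro a
    have := iota_mul one a
    rwa [one_mul] at this
  have inv_inv : ∀ a : B, inv (inv a) = a := by
    intro a
    calc inv (inv a) = mul (inv (inv a)) one := (mul_one _).symm
      _ = mul (inv (inv a)) (mul (inv a) a) := by rw [inv_mul]
      _ = mul (mul (inv (inv a)) (inv a)) a := (mul_assoc _ _ _).symm
      _ = a := by rw [inv_mul, one_mul]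
  refine ⟨?_, hformula⟩
  have hinv : Function.LeftInverse (fun b => inv (mul b (inv (iota one)))) iota ∧
      Function.RightInverse (fun b => inv (mul b (inv (iota one)))) iota := by
    constructor
    · intro a
      simp only [hformula a]
      rw [mul_assoc, mul_inv, mul_one, inv_inv]
    · intro b
      rw [hformula, inv_inv, mul_assoc, inv_mul, mul_one]
  exact ⟨hinv.1.injective, hinv.2.surjective⟩
end

section
/- Let (B,+,∘,ι) be an almost left semi-brace, so that ι is bijective, and define a ⊕ b := ι⁻¹(ι(a) + ι(b)) and a ∘ᵒᵖ b := b ∘ a for a, b ∈ B. Then (B,⊕,∘ᵒᵖ) is a left semi-brace: ⊕ is associative, (B,∘ᵒᵖ) is a group, and a ∘ᵒᵖ (b ⊕ c) = (a ∘ᵒᵖ b) ⊕ (a ∘ᵒᵖ (ā ⊕ c)) for all a, b, c ∈ B, where ā denotes the inverse of a in (B,∘). -/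
/-- Almost left semi-brace: `(B,+)` a semigroup, `(B,∘)` a group with identity
`one` and inverse `inv`, and `iota : B → B` with `ι(a∘b) = b̄ ∘ ι(a)` and
`a ∘ (b + c) = (a ∘ b) + a ∘ (ι(a) + c)`. -/
theorem stmt_14 (B : Type*)
    (add mul : B → B → B) (one : B) (inv : B → B) (iota : B → B)
    (add_assoc : ∀ a b c : B, add (add a b) c = add a (add b c))
    (mul_assoc : ∀ a b c : B, mul (mul a b) c = mul a (mul b c))
    (one_mul : ∀ a : B, mul one a = a) (mul_one : ∀ a : B, mul a one = a)
    (inv_mul : ∀ a : B, mul (inv a) a = one) (mul_inv : ∀ a : B, mul a (inv a) = one)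
    (iota_mul : ∀ a b : B, iota (mul a b) = mul (inv b) (iota a))
    (dist : ∀ a b c : B, mul a (add b c) = add (mul a b) (mul a (add (iota a) c)))
    (iotaInv : B → B)
    (hinv₁ : ∀ a : B, iotaInv (iota a) = a) (hinv₂ : ∀ a : B, iota (iotaInv a) = a)
    (oplus : B → B → B)
    (hoplus : ∀ a b : B, oplus a b = iotaInv (add (iota a) (iota b)))
    (opmul : B → B → B) (hopmul : ∀ a b : B, opmul a b = mul b a) :
    (∀ a b c : B, oplus (oplus a b) c = oplus a (oplus b c)) ∧
      (∀ a b c : B, opmul (opmul a b) c = opmul a (opmul b c)) ∧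
      (∀ a : B, opmul one a = a ∧ opmul a one = a) ∧
      (∀ a : B, opmul (inv a) a = one ∧ opmul a (inv a) = one) ∧
      ∀ a b c : B, opmul a (oplus b c) = oplus (opmul a b) (opmul a (oplus (inv a) c)) := by
  refine ⟨?_, ?_, ?_, ?_, ?_⟩
  · intro a b c
    simp only [hoplus, hinv₂, add_assoc]
  · intro a b c
    simp only [hopmul, mul_assoc]
  · intro a
    simp only [hopmul, one_mul, mul_one, and_self]
  · intro a
    exact ⟨by rw [hopmul, mul_inv], by rw [hopmul, inv_mul]⟩
  · intro a b c
    simp only [hopmul, hoplus]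
    conv_lhs => rw [← hinv₁ (mul (iotaInv (add (iota b) (iota c))) a)]
    congr 1
    rw [iota_mul, hinv₂, iota_mul, iota_mul, hinv₂, dist]
end

section
/- Let (B,+,∘,ι) be an almost left semi-brace satisfying condition (C1): (ι(a) + b) ∘ ι(1) = ι(a) + (b ∘ ι(1)) for all a, b ∈ B. Define λ_a(b) := a ∘ (ι(a) + b), ρ_b(a) := \overline{(ι(a) + b)} ∘ b, and r : B × B → B × B by r(a,b) = (λ_a(b), ρ_b(a)). Then r is a set-theoretic solution of the Yang–Baxter equation if and only if condition (C2) holds: a + λ_b(c) ∘ (ι(1) + ρ_c(b)) = a + b ∘ (ι(1) + c) for all a, b, c ∈ B. -/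
/- Almost left semi-brace: `(B,+)` a semigroup, `(B,∘)` a group with identity
`one` and inverse `inv`, and `iota : B → B` with `ι(a∘b) = b̄ ∘ ι(a)` and
`a ∘ (b + c) = (a ∘ b) + a ∘ (ι(a) + c)`. -/

/-- `r × id` on `B × B × B`. -/
def r₁₂ {B : Type*} (r : B × B → B × B) : B × B × B → B × B × B :=
  fun p => ((r (p.1, p.2.1)).1, (r (p.1, p.2.1)).2, p.2.2)

/-- `id × r` on `B × B × B`. -/
def r₂₃ {B : Type*} (r : B × B → B × B) : B × B × B → B × B × B :=
  fun p => (p.1, r p.2)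

/-- `r` is a set-theoretic solution of the Yang–Baxter equation. -/
def IsYBSolution {B : Type*} (r : B × B → B × B) : Prop :=
  (r₁₂ r) ∘ (r₂₃ r) ∘ (r₁₂ r) = (r₂₃ r) ∘ (r₁₂ r) ∘ (r₂₃ r)

theorem key {B : Type*} [Group B] (add : B → B → B) (e : B)
    (addAssoc : ∀ a b c : B, add (add a b) c = add a (add b c))
    (dist : ∀ a b c : B, a * add b c = add (a * b) (a * add (a⁻¹ * e) c))
    (C1 : ∀ x b : B, add (x * e) b * e = add (x * e) (b * e))
    (lam rho : B → B → B)
    (hlam : ∀ a b : B, lam a b = a * add (a⁻¹ * e) b)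
    (hrho : ∀ b a : B, rho b a = (add (a⁻¹ * e) b)⁻¹ * b) :
    IsYBSolution (fun p : B × B => (lam p.1 p.2, rho p.2 p.1)) ↔
      ∀ a b c : B, add a (lam b c * add e (rho c b)) = add a (b * add e c) := by
  have hM : ∀ x y : B, add x y = add x (add e y) := by
    intro x y
    have h := dist 1 x y
    simpa using h
  have hL1 : ∀ a b : B, ((add (a⁻¹ * e) b)⁻¹ * b)⁻¹ * e
      = b⁻¹ * add (a⁻¹ * e) (b * e) := by
    intro a b
    rw [mul_inv_rev, inv_inv, mul_assoc, C1]
  have hL2 : ∀ a b c : B, lam (rho b a) c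
      = (add (a⁻¹ * e) b)⁻¹ * add (add (a⁻¹ * e) (b * e)) (lam b c) := by
    intro a b c
    rw [hlam, hrho, hL1, mul_assoc, dist b, mul_inv_cancel_left, ← hlam]
  have hcomp : ∀ x y : B, lam x y * rho y x = x * y := by
    intro x y; rw [hlam, hrho]; group
  have hrho' : ∀ x y : B, rho y x = (lam x y)⁻¹ * (x * y) := by
    intro x y; rw [← hcomp x y]; group
  have hlam' : ∀ x y : B, lam x y = (x * y) * (rho y x)⁻¹ := by
    intro x y; rw [← hcomp x y]; group
  have hE1 : ∀ a b c : B, lam (lam a b) (lam (rho b a) c) = lam a (lam b c) := by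
    intro a b c
    rw [hL2, hlam a b, hlam (a * add (a⁻¹ * e) b),
        mul_inv_rev, mul_assoc (add (a⁻¹ * e) b)⁻¹ a⁻¹ e]
    have hd := dist (add (a⁻¹ * e) b)⁻¹ (a⁻¹ * e) (lam b c)
    rw [inv_inv, C1] at hd
    rw [← hd, hlam a]
    group
  have hC : ∀ a b c : B, rho c (rho b a)
      = (add (a⁻¹ * e) (b * add e c))⁻¹ * (b * c) := by
    intro a b c
    have h1 : b * add e c = add (b * e) (lam b c) := by
      rw [dist b e c, ← hlam]
    have h2 : add (b⁻¹ * add (a⁻¹ * e) (b * e)) c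
        = b⁻¹ * add (a⁻¹ * e) (b * add e c) := by
      have hd := dist b (b⁻¹ * add (a⁻¹ * e) (b * e)) c
      rw [mul_inv_cancel_left, ← hlam, addAssoc, ← h1] at hd
      rw [← hd, inv_mul_cancel_left]
    rw [hrho c (rho b a), hrho b a, hL1, h2, mul_inv_rev, inv_inv, mul_assoc]
  have hE3iff : ∀ a b c : B,
      (rho c (rho b a) = rho (rho c b) (rho (lam b c) a)) ↔
        add (a⁻¹ * e) (lam b c * add e (rho c b)) = add (a⁻¹ * e) (b * add e c) := by
    intro a b c
    rw [hC a b c, hC a (lam b c) (rho c b), hcomp]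
    constructor
    · intro h
      exact (inv_injective (mul_right_cancel h)).symm
    · intro h
      rw [h]
  constructor
  · intro hr a b c
    have h := congrFun hr (1, b, c)
    simp only [r₁₂, r₂₃, Function.comp_apply, Prod.mk.injEq] at h
    obtain ⟨-, -, h3⟩ := h
    have h4 := (hE3iff 1 b c).mp h3
    rw [inv_one, one_mul] at h4
    rw [hM, h4, ← hM]
  · intro hc2
    have hE3 : ∀ a b c : B, rho c (rho b a) = rho (rho c b) (rho (lam b c) a) :=
      fun a b c => (hE3iff a b c).mpr (hc2 (a⁻¹ * e) b c)
    have hE2 : ∀ a b c : B,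
        rho (lam (rho b a) c) (lam a b) = lam (rho (lam b c) a) (rho c b) := by
      intro a b c
      rw [hrho' (lam a b), hE1, hlam' (rho b a) c, hlam' a b,
          hlam' (rho (lam b c) a), ← hE3, hrho' a (lam b c), hrho' b c]
      group
    unfold IsYBSolution
    funext p
    obtain ⟨a, b, c⟩ := p
    simp only [r₁₂, r₂₃, Function.comp_apply, Prod.mk.injEq]
    exact ⟨hE1 a b c, hE2 a b c, hE3 a b c⟩

theorem stmt_15 (B : Type*)
    (add mul : B → B → B) (one : B) (inv : B → B) (iota : B → B)
    (add_assoc : ∀ a b c : B, add (add a b) c = add a (add b c))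
    (mul_assoc : ∀ a b c : B, mul (mul a b) c = mul a (mul b c))
    (one_mul : ∀ a : B, mul one a = a) (mul_one : ∀ a : B, mul a one = a)
    (inv_mul : ∀ a : B, mul (inv a) a = one) (mul_inv : ∀ a : B, mul a (inv a) = one)
    (iota_mul : ∀ a b : B, iota (mul a b) = mul (inv b) (iota a))
    (dist : ∀ a b c : B, mul a (add b c) = add (mul a b) (mul a (add (iota a) c)))
    (lam : B → B → B) (hlam : ∀ a b : B, lam a b = mul a (add (iota a) b))
    (rho : B → B → B) (hrho : ∀ b a : B, rho b a = mul (inv (add (iota a) b)) b)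
    (C1 : ∀ a b : B, mul (add (iota a) b) (iota one) = add (iota a) (mul b (iota one))) :
    IsYBSolution (fun p : B × B => (lam p.1 p.2, rho p.2 p.1)) ↔
      ∀ a b c : B,
        add a (mul (lam b c) (add (iota one) (rho c b))) =
          add a (mul b (add (iota one) c)) := by
  letI : Group B :=
    { mul := mul, one := one, inv := inv,
      mul_assoc := mul_assoc, one_mul := one_mul, mul_one := mul_one,
      inv_mul_cancel := inv_mul }
  have F0 : ∀ a : B, iota a = mul (inv a) (iota one) := by
    intro a
    have h := iota_mul one a
    rw [one_mul] at h
    exact h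
  have dist' : ∀ a b c : B, a * add b c = add (a * b) (a * add (a⁻¹ * iota one) c) := by
    intro a b c
    have h := dist a b c
    rw [F0 a] at h
    exact h
  have C1' : ∀ x b : B, add (x * iota one) b * iota one = add (x * iota one) (b * iota one) := by
    intro x b
    have h := C1 (inv x) b
    rw [F0 (inv x)] at h
    have hx : inv (inv x) = x := inv_inv x
    rw [hx] at h
    exact h
  have hlam' : ∀ a b : B, lam a b = a * add (a⁻¹ * iota one) b := by
    intro a b
    rw [hlam a b, F0 a]; exact rfl
  have hrho' : ∀ b a : B, rho b a = (add (a⁻¹ * iota one) b)⁻¹ * b := by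
    intro b a
    rw [hrho b a, F0 a]; exact rfl
  exact key add (iota one) add_assoc dist' C1' lam rho hlam' hrho'
end

section
/- Let (B,+,∘,ι) be an almost left semi-brace satisfying condition (C1): (ι(a) + b) ∘ ι(1) = ι(a) + (b ∘ ι(1)) for all a, b ∈ B, and define λ_a(b) := a ∘ (ι(a) + b) and ρ_b(a) := \overline{(ι(a) + b)} ∘ b. Then for all x, y, z ∈ B one has ρ_z(ρ_y(x)) = \overline{(ι(x) + y ∘ (ι(1) + z))} ∘ (y ∘ z). -/
/-- Almost left semi-brace: `(B,+)` a semigroup, `(B,∘)` a group with identity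
`one` and inverse `inv`, and `iota : B → B` with `ι(a∘b) = b̄ ∘ ι(a)` and
`a ∘ (b + c) = (a ∘ b) + a ∘ (ι(a) + c)`. -/
theorem stmt_16 (B : Type*)
    (add mul : B → B → B) (one : B) (inv : B → B) (iota : B → B)
    (add_assoc : ∀ a b c : B, add (add a b) c = add a (add b c))
    (mul_assoc : ∀ a b c : B, mul (mul a b) c = mul a (mul b c))
    (one_mul : ∀ a : B, mul one a = a) (mul_one : ∀ a : B, mul a one = a)
    (inv_mul : ∀ a : B, mul (inv a) a = one) (mul_inv : ∀ a : B, mul a (inv a) = one)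
    (iota_mul : ∀ a b : B, iota (mul a b) = mul (inv b) (iota a))
    (dist : ∀ a b c : B, mul a (add b c) = add (mul a b) (mul a (add (iota a) c)))
    (lam : B → B → B) (hlam : ∀ a b : B, lam a b = mul a (add (iota a) b))
    (rho : B → B → B) (hrho : ∀ b a : B, rho b a = mul (inv (add (iota a) b)) b)
    (C1 : ∀ a b : B, mul (add (iota a) b) (iota one) = add (iota a) (mul b (iota one))) :
    ∀ x y z : B,
      rho z (rho y x) =
        mul (inv (add (iota x) (mul y (add (iota one) z)))) (mul y z) := by
  intro x y z
  -- uniqueness of inverses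
  have inv_eq : ∀ a b : B, mul a b = one → inv a = b := by
    intro a b h
    calc inv a = mul (inv a) (mul a b) := by rw [h, mul_one]
      _ = b := by rw [← mul_assoc, inv_mul, one_mul]
  have inv_mul_cancel : ∀ a b : B, mul a (mul (inv a) b) = b := by
    intro a b; rw [← mul_assoc, mul_inv, one_mul]
  have mul_inv_cancel : ∀ a b : B, mul (inv a) (mul a b) = b := by
    intro a b; rw [← mul_assoc, inv_mul, one_mul]
  -- ι(b) = b⁻¹ ∘ ι(1)
  have iota_eq : ∀ b : B, iota b = mul (inv b) (iota one) := by
    intro b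
    have := iota_mul one b
    rwa [one_mul] at this
  set s := add (iota x) y with hs
  set r := rho y x with hr
  have hr' : r = mul (inv s) y := hrho y x
  have hinv_r : inv r = mul (inv y) s := by
    apply inv_eq
    rw [hr', mul_assoc, inv_mul_cancel, inv_mul]
  have hiota_r : iota r = mul (inv y) (mul s (iota one)) := by
    rw [iota_eq r, hinv_r, mul_assoc]
  -- key identity: y ∘ (ι(r) + z) = ι(x) + y ∘ (ι(1) + z)
  have key : mul y (add (iota r) z) = add (iota x) (mul y (add (iota one) z)) := by
    have h1 : mul y (iota r) = add (iota x) (mul y (iota one)) := by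
      rw [hiota_r, inv_mul_cancel, hs, C1]
    calc mul y (add (iota r) z)
        = add (mul y (iota r)) (mul y (add (iota y) z)) := dist y (iota r) z
      _ = add (add (iota x) (mul y (iota one))) (mul y (add (iota y) z)) := by rw [h1]
      _ = add (iota x) (add (mul y (iota one)) (mul y (add (iota y) z))) := add_assoc _ _ _
      _ = add (iota x) (mul y (add (iota one) z)) := by rw [← dist y (iota one) z]
  have hinv : inv (add (iota x) (mul y (add (iota one) z)))
      = mul (inv (add (iota r) z)) (inv y) := by
    apply inv_eq
    rw [← key, mul_assoc, inv_mul_cancel, mul_inv]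
  rw [hrho z r, hinv, mul_assoc, mul_inv_cancel]
end

section
/- Let (B,+,∘,ι) be an almost left semi-brace satisfying condition (C1): (ι(a) + b) ∘ ι(1) = ι(a) + (b ∘ ι(1)) for all a, b ∈ B, and define λ_a(b) := a ∘ (ι(a) + b) and ρ_b(a) := \overline{(ι(a) + b)} ∘ b. If ρ is an anti-homomorphism, i.e., ρ_{u ∘ v}(x) = ρ_v(ρ_u(x)) for all u, v, x ∈ B, then condition (C2) holds: a + λ_b(c) ∘ (ι(1) + ρ_c(b)) = a + b ∘ (ι(1) + c) for all a, b, c ∈ B. -/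
/-- Almost left semi-brace: `(B,+)` a semigroup, `(B,∘)` a group with identity
`one` and inverse `inv`, and `iota : B → B` with `ι(a∘b) = b̄ ∘ ι(a)` and
`a ∘ (b + c) = (a ∘ b) + a ∘ (ι(a) + c)`. -/
theorem stmt_17 (B : Type*)
    (add mul : B → B → B) (one : B) (inv : B → B) (iota : B → B)
    (add_assoc : ∀ a b c : B, add (add a b) c = add a (add b c))
    (mul_assoc : ∀ a b c : B, mul (mul a b) c = mul a (mul b c))
    (one_mul : ∀ a : B, mul one a = a) (mul_one : ∀ a : B, mul a one = a)
    (inv_mul : ∀ a : B, mul (inv a) a = one) (mul_inv : ∀ a : B, mul a (inv a) = one)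
    (iota_mul : ∀ a b : B, iota (mul a b) = mul (inv b) (iota a))
    (dist : ∀ a b c : B, mul a (add b c) = add (mul a b) (mul a (add (iota a) c)))
    (lam : B → B → B) (hlam : ∀ a b : B, lam a b = mul a (add (iota a) b))
    (rho : B → B → B) (hrho : ∀ b a : B, rho b a = mul (inv (add (iota a) b)) b)
    (C1 : ∀ a b : B, mul (add (iota a) b) (iota one) = add (iota a) (mul b (iota one)))
    (hanti : ∀ u v x : B, rho (mul u v) x = rho v (rho u x)) :
    ∀ a b c : B,
      add a (mul (lam b c) (add (iota one) (rho c b))) =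
        add a (mul b (add (iota one) c)) := by
  intro a b c
  -- basic group facts
  have inv_rev : ∀ x y : B, inv (mul x y) = mul (inv y) (inv x) := by
    intro x y
    have h : mul (mul x y) (mul (inv y) (inv x)) = one := by
      rw [mul_assoc, ← mul_assoc y, mul_inv, one_mul, mul_inv]
    calc inv (mul x y)
        = mul (inv (mul x y)) (mul (mul x y) (mul (inv y) (inv x))) := by rw [h, mul_one]
      _ = mul (inv y) (inv x) := by rw [← mul_assoc, inv_mul, one_mul]
  have inv_inv : ∀ x : B, inv (inv x) = x := by
    intro x
    calc inv (inv x) = mul (inv (inv x)) (mul (inv x) x) := by rw [inv_mul, mul_one]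
      _ = x := by rw [← mul_assoc, inv_mul, one_mul]
  -- iota x = x⁻¹ ∘ ι(1)
  have h1 : ∀ x : B, iota x = mul (inv x) (iota one) := by
    intro x; have h := iota_mul one x; rwa [one_mul] at h
  -- E1 : p + (ι(1)+q) = p + q
  have hE1 : ∀ p q : B, add p (add (iota one) q) = add p q := by
    intro p q
    have h := dist one p q
    rw [one_mul, one_mul, one_mul] at h
    exact h.symm
  -- star : ι(x) + u∘v = u ∘ (ι(ρ_u(x)) + v)
  have hstar : ∀ x u v : B,
      add (iota x) (mul u v) = mul u (add (iota (rho u x)) v) := by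
    intro x u v
    have h := hanti u v x
    rw [hrho (mul u v) x, hrho v (rho u x)] at h
    set A := add (iota x) (mul u v) with hA
    set C := add (iota (rho u x)) v with hC
    -- h : mul (inv A) (mul u v) = mul (inv C) v
    have h2 : mul u v = mul A (mul (inv C) v) := by
      rw [← h, ← mul_assoc, mul_inv, one_mul]
    have h3 : mul u v = mul (mul A (inv C)) v := by rw [mul_assoc]; exact h2
    have h4 : u = mul A (inv C) := by
      have h5 := congrArg (fun z => mul z (inv v)) h3
      simpa only [mul_assoc, mul_inv, mul_one] using h5
    show A = mul u C
    rw [h4, mul_assoc, inv_mul, mul_one]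
  -- choose x0 with iota x0 = a
  set x0 := mul (iota one) (inv a) with hx0
  have hsurj : iota x0 = a := by
    rw [h1, hx0, inv_rev, inv_inv, mul_assoc, inv_mul, mul_one]
  have hstar' : ∀ u v : B, add a (mul u v) = mul u (add (iota (rho u x0)) v) := by
    intro u v
    have h := hstar x0 u v
    rwa [hsurj] at h
  have lamrho : mul (lam b c) (rho c b) = mul b c := by
    rw [hlam, hrho, mul_assoc, ← mul_assoc (add (iota b) c), mul_inv, one_mul]
  calc add a (mul (lam b c) (add (iota one) (rho c b)))
      = mul (lam b c) (add (iota (rho (lam b c) x0)) (add (iota one) (rho c b))) :=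
        hstar' _ _
    _ = mul (lam b c) (add (iota (rho (lam b c) x0)) (rho c b)) := by rw [hE1]
    _ = add a (mul (lam b c) (rho c b)) := (hstar' _ _).symm
    _ = add a (mul b c) := by rw [lamrho]
    _ = mul b (add (iota (rho b x0)) c) := hstar' _ _
    _ = mul b (add (iota (rho b x0)) (add (iota one) c)) := by rw [hE1]
    _ = add a (mul b (add (iota one) c)) := (hstar' _ _).symm
end

section
/- Let (B,+,∘,ι) be an almost left semi-brace satisfying condition (C1): (ι(a) + b) ∘ ι(1) = ι(a) + (b ∘ ι(1)) for all a, b ∈ B, and condition (C2): a + λ_b(c) ∘ (ι(1) + ρ_c(b)) = a + b ∘ (ι(1) + c) for all a, b, c ∈ B, where λ_a(b) := a ∘ (ι(a) + b) and ρ_b(a) := \overline{(ι(a) + b)} ∘ b. Define a ⊕ b := ι⁻¹(ι(a) + ι(b)) and a ∘ᵒᵖ b := b ∘ a, and for the left semi-brace (B,⊕,∘ᵒᵖ) set λ'_a(b) := a ∘ᵒᵖ (ā ⊕ b) and ρ'_b(a) := \overline{(ā ⊕ b)} ∘ᵒᵖ b (inverses taken in the group (B,∘)). Then λ'_a(b)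 = \overline{λ_{ā}(b̄)} and ρ'_b(a) = \overline{ρ_{b̄}(ā)} for all a, b ∈ B, and (B,⊕,∘ᵒᵖ) satisfies: a ⊕ (λ'_b(c) ∘ᵒᵖ (1 ⊕ ρ'_c(b))) = a ⊕ (b ∘ᵒᵖ (1 ⊕ c)) for all a, b, c ∈ B, where 1 is the identity of (B,∘). -/
/-- Almost left semi-brace: `(B,+)` a semigroup, `(B,∘)` a group with identity
`one` and inverse `inv`, and `iota : B → B` with `ι(a∘b) = b̄ ∘ ι(a)` and
`a ∘ (b + c) = (a ∘ b) + a ∘ (ι(a) + c)`. -/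
theorem stmt_18 (B : Type*)
    (add mul : B → B → B) (one : B) (inv : B → B) (iota : B → B)
    (add_assoc : ∀ a b c : B, add (add a b) c = add a (add b c))
    (mul_assoc : ∀ a b c : B, mul (mul a b) c = mul a (mul b c))
    (one_mul : ∀ a : B, mul one a = a) (mul_one : ∀ a : B, mul a one = a)
    (inv_mul : ∀ a : B, mul (inv a) a = one) (mul_inv : ∀ a : B, mul a (inv a) = one)
    (iota_mul : ∀ a b : B, iota (mul a b) = mul (inv b) (iota a))
    (dist : ∀ a b c : B, mul a (add b c) = add (mul a b) (mul a (add (iota a) c)))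
    (lam : B → B → B) (hlam : ∀ a b : B, lam a b = mul a (add (iota a) b))
    (rho : B → B → B) (hrho : ∀ b a : B, rho b a = mul (inv (add (iota a) b)) b)
    (C1 : ∀ a b : B, mul (add (iota a) b) (iota one) = add (iota a) (mul b (iota one)))
    (C2 : ∀ a b c : B,
      add a (mul (lam b c) (add (iota one) (rho c b))) =
        add a (mul b (add (iota one) c)))
    (iotaInv : B → B)
    (hinv₁ : ∀ a : B, iotaInv (iota a) = a) (hinv₂ : ∀ a : B, iota (iotaInv a) = a)
    (oplus : B → B → B)
    (hoplus : ∀ a b : B, oplus a b = iotaInv (add (iota a) (iota b)))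
    (opmul : B → B → B) (hopmul : ∀ a b : B, opmul a b = mul b a)
    (lam' : B → B → B) (hlam' : ∀ a b : B, lam' a b = opmul a (oplus (inv a) b))
    (rho' : B → B → B) (hrho' : ∀ b a : B, rho' b a = opmul (inv (oplus (inv a) b)) b) :
    (∀ a b : B, lam' a b = inv (lam (inv a) (inv b))) ∧
      (∀ a b : B, rho' b a = inv (rho (inv b) (inv a))) ∧
      ∀ a b c : B,
        oplus a (opmul (lam' b c) (oplus one (rho' c b))) =
          oplus a (opmul b (oplus one c)) := by
  -- basic group facts
  have cancel : ∀ a b c : B, mul a b = mul a c → b = c := by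
    intro a b c h
    have h2 := congrArg (mul (inv a)) h
    rwa [← mul_assoc, ← mul_assoc, inv_mul, one_mul, one_mul] at h2
  have inv_inv : ∀ a : B, inv (inv a) = a := by
    intro a
    apply cancel (inv a)
    rw [mul_inv, inv_mul]
  have mul_inv_rev : ∀ a b : B, inv (mul a b) = mul (inv b) (inv a) := by
    intro a b
    apply cancel (mul a b)
    rw [mul_inv, mul_assoc, ← mul_assoc b, mul_inv, one_mul, mul_inv]
  -- iota and iotaInv in closed form
  have iota_eq : ∀ a : B, iota a = mul (inv a) (iota one) := by
    intro a
    conv_lhs => rw [← one_mul a, iota_mul]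
  have iotaInv_eq : ∀ x : B, iotaInv x = mul (iota one) (inv x) := by
    intro x
    have h := hinv₂ x
    rw [iota_eq] at h
    have h2 : inv (iotaInv x) = mul x (inv (iota one)) := by
      conv_rhs => rw [← h]
      rw [mul_assoc, mul_inv, mul_one]
    calc iotaInv x = inv (inv (iotaInv x)) := (inv_inv _).symm
      _ = inv (mul x (inv (iota one))) := by rw [h2]
      _ = mul (iota one) (inv x) := by rw [mul_inv_rev, inv_inv]
  -- key simplification of oplus, using C1
  have oplus_inv : ∀ a b : B, oplus (inv a) b = inv (add (iota (inv a)) (inv b)) := by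
    intro a b
    rw [hoplus, iotaInv_eq, iota_eq b, ← C1 (inv a) (inv b), mul_inv_rev, ← mul_assoc,
      mul_inv, one_mul]
  have oplus_gen : ∀ a b : B, oplus a b = inv (add (iota a) (inv b)) := by
    intro a b
    have h := oplus_inv (inv a) b
    rwa [inv_inv] at h
  -- Claim 1
  have claim1 : ∀ a b : B, lam' a b = inv (lam (inv a) (inv b)) := by
    intro a b
    rw [hlam', hopmul, oplus_inv, hlam, mul_inv_rev, inv_inv]
  -- Claim 2
  have claim2 : ∀ a b : B, rho' b a = inv (rho (inv b) (inv a)) := by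
    intro a b
    rw [hrho', hopmul, oplus_inv, inv_inv, hrho, mul_inv_rev, inv_inv, inv_inv]
  refine ⟨claim1, claim2, ?_⟩
  -- Claim 3
  intro a b c
  rw [hopmul, hopmul, oplus_gen a, oplus_gen a, oplus_gen one, oplus_gen one,
    claim1, claim2, inv_inv]
  congr 1
  rw [mul_inv_rev, mul_inv_rev, inv_inv, inv_inv, inv_inv]
  exact C2 (iota a) (inv b) (inv c)
end

section
/- Let (B,+,∘,ι) be an almost left semi-brace satisfying condition (C1): (ι(a) + b) ∘ ι(1) = ι(a) + (b ∘ ι(1)) for all a, b ∈ B, and condition (C2): a + λ_b(c) ∘ (ι(1) + ρ_c(b)) = a + b ∘ (ι(1) + c) for all a, b, c ∈ B, where λ_a(b) := a ∘ (ι(a) + b) and ρ_b(a) := \overline{(ι(a) + b)} ∘ b. Let r(a,b) = (λ_a(b), ρ_b(a)), and let r'(a,b) = (λ'_a(b), ρ'_b(a)) be the solution associated to the left semi-brace (B,⊕,∘ᵒᵖ), where λ'_a(b) := a ∘ᵒᵖ (ā ⊕ b) and ρ'_b(a) := \overline{(ā ⊕ b)} ∘ᵒᵖ b. Then the map f : B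 → B, f(a) = ā, is an isomorphism of solutions from (B,r) to (B,r'); that is, f is bijective and (f × f) ∘ r = r' ∘ (f × f). -/
/-- Almost left semi-brace: `(B,+)` a semigroup, `(B,∘)` a group with identity
`one` and inverse `inv`, and `iota : B → B` with `ι(a∘b) = b̄ ∘ ι(a)` and
`a ∘ (b + c) = (a ∘ b) + a ∘ (ι(a) + c)`. -/
theorem stmt_19 (B : Type*)
    (add mul : B → B → B) (one : B) (inv : B → B) (iota : B → B)
    (add_assoc : ∀ a b c : B, add (add a b) c = add a (add b c))
    (mul_assoc : ∀ a b c : B, mul (mul a b) c = mul a (mul b c))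
    (one_mul : ∀ a : B, mul one a = a) (mul_one : ∀ a : B, mul a one = a)
    (inv_mul : ∀ a : B, mul (inv a) a = one) (mul_inv : ∀ a : B, mul a (inv a) = one)
    (iota_mul : ∀ a b : B, iota (mul a b) = mul (inv b) (iota a))
    (dist : ∀ a b c : B, mul a (add b c) = add (mul a b) (mul a (add (iota a) c)))
    (lam : B → B → B) (hlam : ∀ a b : B, lam a b = mul a (add (iota a) b))
    (rho : B → B → B) (hrho : ∀ b a : B, rho b a = mul (inv (add (iota a) b)) b)
    (C1 : ∀ a b : B, mul (add (iota a) b) (iota one) = add (iota a) (mul b (iota one)))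
    (C2 : ∀ a b c : B,
      add a (mul (lam b c) (add (iota one) (rho c b))) =
        add a (mul b (add (iota one) c)))
    (iotaInv : B → B)
    (hinv₁ : ∀ a : B, iotaInv (iota a) = a) (hinv₂ : ∀ a : B, iota (iotaInv a) = a)
    (oplus : B → B → B)
    (hoplus : ∀ a b : B, oplus a b = iotaInv (add (iota a) (iota b)))
    (opmul : B → B → B) (hopmul : ∀ a b : B, opmul a b = mul b a)
    (lam' : B → B → B) (hlam' : ∀ a b : B, lam' a b = opmul a (oplus (inv a) b))
    (rho' : B → B → B) (hrho' : ∀ b a : B, rho' b a = opmul (inv (oplus (inv a) b)) b) :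
    Function.Bijective (fun a : B => inv a) ∧
      (fun p : B × B => ((inv (lam p.1 p.2), inv (rho p.2 p.1)) : B × B)) =
        (fun p : B × B => ((lam' (inv p.1) (inv p.2), rho' (inv p.2) (inv p.1)) : B × B)) := by
  have inv_invx : ∀ x : B, inv (inv x) = x := by
    intro x
    have h1 : mul (inv (inv x)) (inv x) = one := inv_mul (inv x)
    calc inv (inv x) = mul (inv (inv x)) one := (mul_one _).symm
      _ = mul (inv (inv x)) (mul (inv x) x) := by rw [inv_mul]
      _ = mul (mul (inv (inv x)) (inv x)) x := (mul_assoc _ _ _).symm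
      _ = mul one x := by rw [h1]
      _ = x := one_mul x
  have inv_rev : ∀ x y : B, inv (mul x y) = mul (inv y) (inv x) := by
    intro x y
    have h2 : mul (mul (inv y) (inv x)) (mul x y) = one := by
      rw [mul_assoc, ← mul_assoc (inv x), inv_mul, one_mul, inv_mul]
    calc inv (mul x y) = mul one (inv (mul x y)) := (one_mul _).symm
      _ = mul (mul (mul (inv y) (inv x)) (mul x y)) (inv (mul x y)) := by rw [h2]
      _ = mul (mul (inv y) (inv x)) (mul (mul x y) (inv (mul x y))) := mul_assoc _ _ _
      _ = mul (inv y) (inv x) := by rw [mul_inv, mul_one]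
  have iota_inv : ∀ x : B, iota (inv x) = mul x (iota one) := by
    intro x
    have h : iota one = mul (inv x) (iota (inv x)) := by
      have h2 := iota_mul (inv x) x
      rw [inv_mul] at h2
      exact h2
    calc iota (inv x) = mul one (iota (inv x)) := (one_mul _).symm
      _ = mul (mul x (inv x)) (iota (inv x)) := by rw [mul_inv]
      _ = mul x (mul (inv x) (iota (inv x))) := mul_assoc _ _ _
      _ = mul x (iota one) := by rw [← h]
  have keyInv : ∀ a b : B, iotaInv (add (iota a) (iota (inv b))) = inv (add (iota a) b) := by
    intro a b
    have : iota (inv (add (iota a) b)) = add (iota a) (iota (inv b)) := by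
      rw [iota_inv, C1, ← iota_inv]
    rw [← this, hinv₁]
  refine ⟨Function.bijective_iff_has_inverse.mpr ⟨inv, fun a => inv_invx a, fun a => inv_invx a⟩, ?_⟩
  funext p
  obtain ⟨a, b⟩ := p
  simp only [Prod.mk.injEq]
  constructor
  · rw [hlam, hlam', hopmul, hoplus, inv_invx, keyInv, inv_rev]
  · rw [hrho, hrho', hopmul, hoplus, inv_invx, keyInv, inv_invx, inv_rev, inv_invx]
end
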